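/- A configuration B = {b_1 < b_2 < ... < b_n} of distinct nonzero integers is supernormal if and only if either b_1 = 1, or b_n = -1, or both -1 and +1 belong to B. -/

import Mathlib

/-- `x ∈ ℝ` lies in the cone (nonnegative real span) of a set `B ⊆ ℤ` of integers. -/
def Cone1 (B : Set ℤ) (x : ℝ) : Prop :=
  ∃ (s : Finset ℤ) (c : ℤ → ℝ), ↑s ⊆ B ∧ (∀ b, 0 ≤ c b) ∧ x = ∑ b ∈ s, c b * (b : ℝ)

/-- `z` is a nonnegative integer combination of elements of `B ⊆ ℤ`. -/
def NNComb1 (B : Set ℤ) (z : ℤ) : Prop :=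
  ∃ (s : Finset ℤ) (c : ℤ → ℕ), ↑s ⊆ B ∧ z = ∑ b ∈ s, (c b : ℤ) * b

/-- A configuration `B ⊆ ℤ` is supernormal if for every subset `B' ⊆ B`, every integer in
`cone(B')` is a nonnegative integer combination of `B ∩ cone(B')`. -/
def Supernormal1 (B : Set ℤ) : Prop :=
  ∀ B' ⊆ B, ∀ z : ℤ, Cone1 B' (z : ℝ) → NNComb1 {b ∈ B | Cone1 B' (b : ℝ)} z

lemma cone_nonneg {B' : Set ℤ} (hB' : ∀ b ∈ B', (0:ℤ) ≤ b) {x : ℝ}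
    (h : Cone1 B' x) : 0 ≤ x := by
  obtain ⟨s, c, hs, hc, rfl⟩ := h
  refine Finset.sum_nonneg fun b hb => mul_nonneg (hc b) ?_
  exact_mod_cast hB' b (hs hb)

lemma cone_nonpos {B' : Set ℤ} (hB' : ∀ b ∈ B', b ≤ (0:ℤ)) {x : ℝ}
    (h : Cone1 B' x) : x ≤ 0 := by
  obtain ⟨s, c, hs, hc, rfl⟩ := h
  refine Finset.sum_nonpos fun b hb => mul_nonpos_of_nonneg_of_nonpos (hc b) ?_
  exact_mod_cast hB' b (hs hb)

lemma cone_of_pos {B' : Set ℤ} {p : ℤ} (hp : p ∈ B') (hpos : 0 < p) {x : ℝ}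
    (hx : 0 ≤ x) : Cone1 B' x := by
  have hp0 : (p : ℝ) ≠ 0 := by exact_mod_cast hpos.ne'
  refine ⟨{p}, fun _ => x / p, by simpa using hp,
    fun b => div_nonneg hx (by exact_mod_cast hpos.le), ?_⟩
  field_simp
  rw [Finset.sum_singleton, mul_div_assoc, div_self hp0, mul_one]

lemma cone_of_neg {B' : Set ℤ} {p : ℤ} (hp : p ∈ B') (hneg : p < 0) {x : ℝ}
    (hx : x ≤ 0) : Cone1 B' x := by
  have hp0 : (p : ℝ) ≠ 0 := by exact_mod_cast hneg.ne
  refine ⟨{p}, fun _ => x / p, by simpa using hp,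
    fun b => div_nonneg_of_nonpos hx (by exact_mod_cast hneg.le), ?_⟩
  field_simp
  rw [Finset.sum_singleton, mul_div_assoc, div_self hp0, mul_one]

lemma exists_pos_of_cone_pos {B' : Set ℤ} {x : ℝ} (h : Cone1 B' x) (hx : 0 < x) :
    ∃ p ∈ B', (0:ℤ) < p := by
  by_contra hc
  push_neg at hc
  exact absurd (cone_nonpos hc h) (not_le.mpr hx)

lemma exists_neg_of_cone_neg {B' : Set ℤ} {x : ℝ} (h : Cone1 B' x) (hx : x < 0) :
    ∃ p ∈ B', p < (0:ℤ) := by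
  by_contra hc
  push_neg at hc
  exact absurd (cone_nonneg hc h) (not_le.mpr hx)

lemma one_mem_of_supernormal {B : Finset ℤ} (h0 : (0 : ℤ) ∉ B)
    (h : Supernormal1 ↑B) {p : ℤ} (hpB : p ∈ B) (hp : 0 < p) : (1:ℤ) ∈ B := by
  have hsub : ({p} : Set ℤ) ⊆ ↑B := by simpa using hpB
  have hcone : Cone1 {p} ((1:ℤ):ℝ) :=
    cone_of_pos (Set.mem_singleton p) hp (by norm_num)
  obtain ⟨s, c, hs, heq⟩ := h {p} hsub 1 hcone
  by_contra h1
  have hb2 : ∀ b ∈ s, (2:ℤ) ≤ b := by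
    intro b hb
    have hmem := hs hb
    obtain ⟨hbB, hbc⟩ := hmem
    have hb0 : (0:ℝ) ≤ (b:ℝ) :=
      cone_nonneg (by rintro x rfl; exact hp.le) hbc
    have hb0' : (0:ℤ) ≤ b := by exact_mod_cast hb0
    have : b ≠ 0 := fun hbz => h0 (hbz ▸ hbB)
    have : b ≠ 1 := fun hbz => h1 (hbz ▸ hbB)
    omega
  have hsum : ∑ b ∈ s, 2 * (c b : ℤ) ≤ ∑ b ∈ s, (c b : ℤ) * b := by
    refine Finset.sum_le_sum fun b hb => ?_
    have := hb2 b hb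
    nlinarith [Int.ofNat_nonneg (c b)]
  rw [← heq, ← Finset.mul_sum] at hsum
  have hS : (0:ℤ) ≤ ∑ b ∈ s, (c b : ℤ) :=
    Finset.sum_nonneg fun b _ => Int.ofNat_nonneg _
  have hS0 : ∑ b ∈ s, (c b : ℤ) = 0 := by omega
  have hz : ∀ b ∈ s, (c b : ℤ) = 0 :=
    (Finset.sum_eq_zero_iff_of_nonneg fun b _ => Int.ofNat_nonneg _).mp hS0
  have : (1:ℤ) = 0 := by
    rw [heq]
    exact Finset.sum_eq_zero fun b hb => by rw [hz b hb, zero_mul]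
  exact one_ne_zero this

lemma neg_one_mem_of_supernormal {B : Finset ℤ} (h0 : (0 : ℤ) ∉ B)
    (h : Supernormal1 ↑B) {p : ℤ} (hpB : p ∈ B) (hp : p < 0) : (-1:ℤ) ∈ B := by
  have hsub : ({p} : Set ℤ) ⊆ ↑B := by simpa using hpB
  have hcone : Cone1 {p} ((-1:ℤ):ℝ) :=
    cone_of_neg (Set.mem_singleton p) hp (by norm_num)
  obtain ⟨s, c, hs, heq⟩ := h {p} hsub (-1) hcone
  by_contra h1
  have hb2 : ∀ b ∈ s, b ≤ (-2:ℤ) := by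
    intro b hb
    have hmem := hs hb
    obtain ⟨hbB, hbc⟩ := hmem
    have hb0 : (b:ℝ) ≤ 0 :=
      cone_nonpos (by rintro x rfl; exact hp.le) hbc
    have hb0' : b ≤ (0:ℤ) := by exact_mod_cast hb0
    have : b ≠ 0 := fun hbz => h0 (hbz ▸ hbB)
    have : b ≠ -1 := fun hbz => h1 (hbz ▸ hbB)
    omega
  have hsum : ∑ b ∈ s, (c b : ℤ) * b ≤ ∑ b ∈ s, (-2) * (c b : ℤ) := by
    refine Finset.sum_le_sum fun b hb => ?_
    have := hb2 b hb
    nlinarith [Int.ofNat_nonneg (c b)]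
  rw [← heq, ← Finset.mul_sum] at hsum
  have hS : (0:ℤ) ≤ ∑ b ∈ s, (c b : ℤ) :=
    Finset.sum_nonneg fun b _ => Int.ofNat_nonneg _
  have hS0 : ∑ b ∈ s, (c b : ℤ) = 0 := by omega
  have hz : ∀ b ∈ s, (c b : ℤ) = 0 :=
    (Finset.sum_eq_zero_iff_of_nonneg fun b _ => Int.ofNat_nonneg _).mp hS0
  have : (-1:ℤ) = 0 := by
    rw [heq]
    exact Finset.sum_eq_zero fun b hb => by rw [hz b hb, zero_mul]
  omega

theorem stmt0 (B : Finset ℤ) (hne : B.Nonempty) (h0 : (0 : ℤ) ∉ B) :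
    Supernormal1 ↑B ↔
      (B.min' hne = 1 ∨ B.max' hne = -1 ∨ ((-1 : ℤ) ∈ B ∧ (1 : ℤ) ∈ B)) := by
  constructor
  · intro h
    have hM := B.max'_mem hne
    have hm := B.min'_mem hne
    have hM0 : B.max' hne ≠ 0 := fun hz => h0 (hz ▸ hM)
    have hm0 : B.min' hne ≠ 0 := fun hz => h0 (hz ▸ hm)
    rcases lt_or_gt_of_ne hM0 with hMneg | hMpos
    · -- all negative
      right; left
      have hn1 : (-1:ℤ) ∈ B := neg_one_mem_of_supernormal h0 h hM hMneg
      have := B.le_max' (-1) hn1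
      omega
    · have h1 : (1:ℤ) ∈ B := one_mem_of_supernormal h0 h hM hMpos
      rcases lt_or_gt_of_ne hm0 with hmneg | hmpos
      · right; right
        exact ⟨neg_one_mem_of_supernormal h0 h hm hmneg, h1⟩
      · left
        have := B.min'_le 1 h1
        omega
  · intro hcond
    intro B' hB' z hz
    rcases lt_trichotomy z 0 with hneg | rfl | hpos
    · -- z < 0
      obtain ⟨p, hpB', hp⟩ := exists_neg_of_cone_neg hz (by exact_mod_cast hneg)
      have hpB : p ∈ B := hB' hpB'
      have hn1 : (-1:ℤ) ∈ B := by
        rcases hcond with hmin | hmax | ⟨hn, _⟩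
        · have := B.min'_le p hpB; omega
        · exact hmax ▸ B.max'_mem hne
        · exact hn
      refine ⟨{-1}, fun _ => (-z).toNat, ?_, ?_⟩
      · intro b hb
        simp only [Finset.coe_singleton, Set.mem_singleton_iff] at hb
        subst hb
        exact ⟨hn1, cone_of_neg hpB' hp (by norm_num)⟩
      · simp only [Finset.sum_singleton]
        have : ((-z).toNat : ℤ) = -z := Int.toNat_of_nonneg (by omega)
        rw [this]; ring
    · -- z = 0
      exact ⟨∅, fun _ => 0, by simp, by simp⟩
    · -- z > 0
      obtain ⟨p, hpB', hp⟩ := exists_pos_of_cone_pos hz (by exact_mod_cast hpos)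
      have hpB : p ∈ B := hB' hpB'
      have h1 : (1:ℤ) ∈ B := by
        rcases hcond with hmin | hmax | ⟨_, h1⟩
        · exact hmin ▸ B.min'_mem hne
        · have := B.le_max' p hpB; omega
        · exact h1
      refine ⟨{1}, fun _ => z.toNat, ?_, ?_⟩
      · intro b hb
        simp only [Finset.coe_singleton, Set.mem_singleton_iff] at hb
        subst hb
        exact ⟨h1, cone_of_pos hpB' hp (by norm_num)⟩
      · simp only [Finset.sum_singleton]
        have : (z.toNat : ℤ) = z := Int.toNat_of_nonneg (by omega)
        rw [this]; ring
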